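/- Let γ ≥ 3 be a real number and let a : ℕ → ℝ (defined for indices j ≥ 1) satisfy M := sup_{j ≥ 1} j^γ · |a_j| < ∞. Then for every integer q ≥ 1 the series ∑_{s=1}^∞ a_{s·q} converges absolutely, and q^γ · | ∑_{s=1}^∞ a_{s·q} − a_q | ≤ (ζ(3) − 1) · M, where ζ(3) = ∑_{n=1}^∞ n^{−3}. -/

import Mathlib

/-- Divisor-sum estimate: if `sup_{j≥1} j^γ |a_j| ≤ M` with `γ ≥ 3`, then for every `q ≥ 1`
the series `∑_{s≥1} a_{sq}` converges absolutely and
`q^γ · |∑_{s≥1} a_{sq} − a_q| ≤ (ζ(3) − 1) · M`. -/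
theorem divisor_sum_estimate
    (γ : ℝ) (hγ : 3 ≤ γ) (a : ℕ → ℝ) (M : ℝ)
    (hM : ∀ j : ℕ, 1 ≤ j → (j : ℝ) ^ γ * |a j| ≤ M) :
    ∀ q : ℕ, 1 ≤ q →
      Summable (fun s : ℕ => |a ((s + 1) * q)|) ∧
      (q : ℝ) ^ γ * |(∑' s : ℕ, a ((s + 1) * q)) - a q| ≤
        ((∑' n : ℕ, (1 : ℝ) / ((n : ℝ) + 1) ^ 3) - 1) * M := by
  intro q hq
  have hq0 : (0:ℝ) < (q:ℝ) := by exact_mod_cast hq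
  have hqγ : (0:ℝ) < (q:ℝ) ^ γ := Real.rpow_pos_of_pos hq0 γ
  have hM0 : 0 ≤ M := le_trans (by positivity) (hM 1 le_rfl)
  have hγ1 : (1:ℝ) < γ := lt_of_lt_of_le (by norm_num) hγ
  -- pointwise bound
  have key : ∀ s : ℕ, |a ((s + 1) * q)| ≤ (M / (q:ℝ)^γ) * ((s:ℝ)+1) ^ (-γ) := by
    intro s
    have h1 : (1:ℕ) ≤ (s+1)*q := Nat.one_le_iff_ne_zero.mpr (by positivity)
    have h := hM ((s+1)*q) h1
    have hcast : (((s+1)*q : ℕ):ℝ) = ((s:ℝ)+1) * (q:ℝ) := by push_cast; ring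
    rw [hcast, Real.mul_rpow (by positivity) (by positivity)] at h
    have hs : (0:ℝ) < ((s:ℝ)+1) ^ γ := Real.rpow_pos_of_pos (by positivity) γ
    have heq : (M / (q:ℝ)^γ) * ((s:ℝ)+1) ^ (-γ) = M / (((s:ℝ)+1)^γ * (q:ℝ)^γ) := by
      rw [Real.rpow_neg (by positivity : (0:ℝ) ≤ (s:ℝ)+1)]
      field_simp
    rw [heq, le_div_iff₀ (by positivity)]
    nlinarith [h]
  -- summability of the comparison series
  have hsum0 : Summable (fun s : ℕ => ((s:ℝ)+1) ^ (-γ)) := by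
    have h := (Real.summable_nat_rpow_inv).mpr hγ1
    have h2 := (summable_nat_add_iff 1).mpr h
    refine h2.congr fun s => ?_
    rw [Real.rpow_neg (by positivity)]
    push_cast
    ring_nf
  have hsumb : Summable (fun s : ℕ => (M / (q:ℝ)^γ) * ((s:ℝ)+1) ^ (-γ)) := hsum0.mul_left _
  have hsumabs : Summable (fun s : ℕ => |a ((s + 1) * q)|) :=
    Summable.of_nonneg_of_le (fun s => abs_nonneg _) key hsumb
  refine ⟨hsumabs, ?_⟩
  have hf : Summable (fun s : ℕ => a ((s + 1) * q)) := hsumabs.of_abs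
  -- split off the first term
  have hsplit : (∑' s : ℕ, a ((s + 1) * q)) - a q = ∑' s : ℕ, a ((s + 2) * q) := by
    rw [Summable.tsum_eq_zero_add hf]
    simp only [zero_add, one_mul]
    rw [add_sub_cancel_left]
  rw [hsplit]
  -- summability of shifted series
  have hsumabs2 : Summable (fun s : ℕ => |a ((s + 2) * q)|) :=
    ((summable_nat_add_iff 1).mpr hsumabs).congr (fun s => rfl)
  have hsumb2 : Summable (fun s : ℕ => (M / (q:ℝ)^γ) * ((s:ℝ)+2) ^ (-γ)) := by
    have := ((summable_nat_add_iff 1).mpr hsumb)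
    refine this.congr fun s => ?_
    push_cast
    ring_nf
  have hbound : |∑' s : ℕ, a ((s + 2) * q)| ≤ ∑' s : ℕ, (M / (q:ℝ)^γ) * ((s:ℝ)+2) ^ (-γ) := by
    have habs : |∑' s : ℕ, a ((s + 2) * q)| ≤ ∑' s : ℕ, |a ((s + 2) * q)| := by
      have h := norm_tsum_le_tsum_norm (f := fun s : ℕ => a ((s + 2) * q))
        (by simpa [Real.norm_eq_abs] using hsumabs2)
      simpa [Real.norm_eq_abs] using h
    calc |∑' s : ℕ, a ((s + 2) * q)| ≤ ∑' s : ℕ, |a ((s + 2) * q)| := habs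
      _ ≤ ∑' s : ℕ, (M / (q:ℝ)^γ) * ((s:ℝ)+2) ^ (-γ) := by
          refine Summable.tsum_le_tsum (fun s => ?_) hsumabs2 hsumb2
          have := key (s+1)
          push_cast at this ⊢
          change |a ((s + 2) * q)| ≤ M / (q:ℝ)^γ * ((s:ℝ)+2) ^ (-γ)
          convert this using 3 <;> ring
  -- zeta(3) tail
  have hZsum : Summable (fun n : ℕ => (1:ℝ) / ((n:ℝ) + 1) ^ 3) := by
    have h : Summable (fun n : ℕ => (1:ℝ) / (n:ℝ) ^ 3) :=
      Real.summable_one_div_nat_pow.mpr (by norm_num)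
    refine ((summable_nat_add_iff 1).mpr h).congr fun n => ?_
    push_cast
    ring_nf
  have hZsum2 : Summable (fun n : ℕ => (1:ℝ) / ((n:ℝ) + 2) ^ 3) := by
    refine ((summable_nat_add_iff 1).mpr hZsum).congr fun n => ?_
    push_cast
    ring_nf
  have hsum02 : Summable (fun s : ℕ => ((s:ℝ)+2) ^ (-γ)) := by
    refine ((summable_nat_add_iff 1).mpr hsum0).congr fun n => ?_
    push_cast
    ring_nf
  have hZ : (∑' n : ℕ, (1:ℝ) / ((n:ℝ) + 1) ^ 3) - 1 = ∑' n : ℕ, (1:ℝ) / ((n:ℝ) + 2) ^ 3 := by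
    rw [Summable.tsum_eq_zero_add hZsum]
    push_cast
    norm_num
    exact tsum_congr fun b => by norm_num; ring_nf
  have hterm : ∀ s : ℕ, ((s:ℝ)+2) ^ (-γ) ≤ (1:ℝ) / ((s:ℝ) + 2) ^ 3 := by
    intro s
    have hx : (1:ℝ) ≤ (s:ℝ) + 2 := by
      have := Nat.cast_nonneg (α := ℝ) s
      linarith
    have h := Real.rpow_le_rpow_of_exponent_le hx (neg_le_neg hγ)
    calc ((s:ℝ)+2) ^ (-γ) ≤ ((s:ℝ)+2) ^ (-(3:ℝ)) := h
      _ = (1:ℝ) / ((s:ℝ) + 2) ^ 3 := by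
          rw [Real.rpow_neg (by positivity), show (3:ℝ) = ((3:ℕ):ℝ) by norm_num,
            Real.rpow_natCast, one_div]
  calc (q:ℝ) ^ γ * |∑' s : ℕ, a ((s + 2) * q)|
      ≤ (q:ℝ) ^ γ * ∑' s : ℕ, (M / (q:ℝ)^γ) * ((s:ℝ)+2) ^ (-γ) :=
        mul_le_mul_of_nonneg_left hbound hqγ.le
    _ = M * ∑' s : ℕ, ((s:ℝ)+2) ^ (-γ) := by
        rw [tsum_mul_left]
        field_simp
    _ ≤ M * ∑' s : ℕ, (1:ℝ) / ((s:ℝ) + 2) ^ 3 :=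
        mul_le_mul_of_nonneg_left (Summable.tsum_le_tsum hterm hsum02 hZsum2) hM0
    _ = ((∑' n : ℕ, (1 : ℝ) / ((n : ℝ) + 1) ^ 3) - 1) * M := by rw [hZ]; ring
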